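/- Let $E, Q$ be complex vector spaces with $\dim E = 3$, $\dim Q = 2$. Fix $F^* \subset E^*$ one-dimensional and let $(F^*)^\perp \subset E$ be its annihilator. Let $\sigma_\beta$ be the second fundamental form of $\widetilde{\mathcal A} = \{e^* \otimes q + f\otimes q^2 : \langle e^*,f\rangle = 0\}$ at a point $\beta = e^* \otimes q$ with $0 \neq e^* \in F^*$, $0 \neq q \in Q$, determined by: $\sigma(e^*\otimes q', e^*\otimes q'')=0$, $\sigma(e^*\otimes q', e'^*\otimes q)=e'^*\otimes q'$, $\sigma(e^*\otimes q', f'\otimes q^2)=f'\otimes(2q\circ q')$, $\sigma(e'^*\otimes q, e''^*\otimes q)=0$, $\sigma(e'^*\otimes q, f'\otimes q^2)=(-\langle e'^*,f'\rangle e)\otimes q^2$, $\sigma(f'\otimes q^2, f''\otimes q^2)=0$ (values modulo $T_\beta\widetilde{\mathcal A}$). Let $T_\beta\widetilde{\mathcal B} = \{e^*\otimes q' + e'^*\otimes q + f'\otimes q^2 : e'^* \in F^*, f' \in (F^*)^\perp, q' \in Q\}$. Then $\{\zeta \in T_\beta\widetilde{\mathcal A} : \sigma_\beta(\zeta,\xi)=0\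 \forall\xi \in T_\beta\widetilde{\mathcal B}\} = \mathbb{C}\beta$. -/

import Mathlib

open Module

/-- Ambient space modelling `(E* ⊗ Q) ⊕ (E ⊗ S²Q)` with `E = ℂ³`, `Q = ℂ²`. -/
abbrev AmbF := (Fin 3 → Fin 2 → ℂ) × (Fin 3 → Fin 2 → Fin 2 → ℂ)

/-- The canonical pairing `⟨e*, f⟩` in coordinates (also the fixed inner product on `E*`
identifying `e* ↦ e`). -/
noncomputable def pairE (a b : Fin 3 → ℂ) : ℂ := ∑ i, a i * b i

/-- `e* ⊗ q`. -/
def outer (e : Fin 3 → ℂ) (q : Fin 2 → ℂ) : Fin 3 → Fin 2 → ℂ := fun i j => e i * q j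

/-- `f ⊗ q²`. -/
def cube (f : Fin 3 → ℂ) (q : Fin 2 → ℂ) : Fin 3 → Fin 2 → Fin 2 → ℂ :=
  fun i j l => f i * q j * q l

/-- `f ⊗ (2 q ∘ q')`. -/
def mixed (f : Fin 3 → ℂ) (q q' : Fin 2 → ℂ) : Fin 3 → Fin 2 → Fin 2 → ℂ :=
  fun i j l => f i * (q j * q' l + q' j * q l)
lemma outer_zero_left (q : Fin 2 → ℂ) : outer 0 q = 0 := by
  funext i j; simp [outer]

lemma outer_zero_right (e : Fin 3 → ℂ) : outer e 0 = 0 := by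
  funext i j; simp [outer]

lemma outer_smul_left (c : ℂ) (e : Fin 3 → ℂ) (q : Fin 2 → ℂ) :
    outer (c • e) q = c • outer e q := by
  funext i j; simp [outer]; ring

lemma cube_zero (q : Fin 2 → ℂ) : cube 0 q = 0 := by
  funext i j l; simp [cube]

lemma pairE_zero_right (a : Fin 3 → ℂ) : pairE a 0 = 0 := by simp [pairE]

lemma pairE_smul_right (t : ℂ) (a b : Fin 3 → ℂ) : pairE a (t • b) = t * pairE a b := by
  simp only [pairE, Pi.smul_apply, smul_eq_mul, Finset.mul_sum]
  exact Finset.sum_congr rfl fun i _ => by ring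

lemma pairE_smul_left (t : ℂ) (a b : Fin 3 → ℂ) : pairE (t • a) b = t * pairE a b := by
  simp only [pairE, Pi.smul_apply, smul_eq_mul, Finset.mul_sum]
  exact Finset.sum_congr rfl fun i _ => by ring

lemma mixed_self (f : Fin 3 → ℂ) (q : Fin 2 → ℂ) : mixed f q q = cube ((2:ℂ) • f) q := by
  funext i j l; simp [mixed, cube]; ring

lemma exists_perp (e : Fin 3 → ℂ) (he : e ≠ 0) :
    ∃ (f : Fin 3 → ℂ) (i1 : Fin 3), f i1 ≠ 0 ∧ pairE e f = 0 := by
  obtain ⟨i0, h⟩ := Function.ne_iff.mp he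
  simp only [Pi.zero_apply] at h
  fin_cases i0
  · exact ⟨![e 1, -e 0, 0], 1, by simpa using h, by simp [pairE, Fin.sum_univ_three]; ring⟩
  · exact ⟨![e 1, -e 0, 0], 0, by simpa using h, by simp [pairE, Fin.sum_univ_three]; ring⟩
  · exact ⟨![e 2, 0, -e 0], 0, by simpa using h, by simp [pairE, Fin.sum_univ_three]; ring⟩

/-- nondegeneracy of the pair of VMRT's for `(B₃, α₂, α₃) ⊂ (F₄, α₃)` at a
point `β = e* ⊗ q` (with `0 ≠ e* ∈ F*`, `q ≠ 0`).  `TA` is the tangent space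
`T_β Ã = {e* ⊗ q' + e'* ⊗ q + f' ⊗ q² : ⟨e*, f'⟩ = 0}`, the second fundamental form `σ`
(symmetric, values modulo `TA`) is prescribed on the listed generator pairs (with `e`
corresponding to `e*` under the fixed inner product), and
`T_β B̃ = {e* ⊗ q' + e'* ⊗ q + f' ⊗ q² : e'* ∈ F*, f' ∈ (F*)^⊥}`.  Then
`Ker σ_β(·, T_β B̃) = ℂ β`. -/
theorem nondegeneracy_F4_case
    (Fstar : Submodule ℂ (Fin 3 → ℂ)) (hFstar : finrank ℂ Fstar = 1)
    (estar : Fin 3 → ℂ) (q : Fin 2 → ℂ)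
    (he : estar ≠ 0) (heF : estar ∈ Fstar) (hq : q ≠ 0)
    (TA : Submodule ℂ AmbF)
    (hTA : (TA : Set AmbF) =
      {x | ∃ (e' f' : Fin 3 → ℂ) (q' : Fin 2 → ℂ),
            pairE estar f' = 0 ∧ x = (outer estar q' + outer e' q, cube f' q)})
    (σ : AmbF →ₗ[ℂ] AmbF →ₗ[ℂ] (AmbF ⧸ TA))
    (hsymm : ∀ x y : AmbF, σ x y = σ y x)
    (hA : ∀ q' q'' : Fin 2 → ℂ, σ (outer estar q', 0) (outer estar q'', 0) = 0)
    (hB : ∀ (q' : Fin 2 → ℂ) (e' : Fin 3 → ℂ),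
        σ (outer estar q', 0) (outer e' q, 0) = TA.mkQ (outer e' q', 0))
    (hC : ∀ (q' : Fin 2 → ℂ) (f' : Fin 3 → ℂ), pairE estar f' = 0 →
        σ (outer estar q', 0) (0, cube f' q) = TA.mkQ (0, mixed f' q q'))
    (hD : ∀ e' e'' : Fin 3 → ℂ, σ (outer e' q, 0) (outer e'' q, 0) = 0)
    (hE : ∀ e' f' : Fin 3 → ℂ, pairE estar f' = 0 →
        σ (outer e' q, 0) (0, cube f' q) = TA.mkQ (0, (-(pairE e' f')) • cube estar q))
    (hF : ∀ f' f'' : Fin 3 → ℂ, pairE estar f' = 0 → pairE estar f'' = 0 →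
        σ (0, cube f' q) (0, cube f'' q) = 0) :
    {ζ : AmbF | ζ ∈ TA ∧
        ∀ ξ ∈ {x : AmbF | ∃ (e' f' : Fin 3 → ℂ) (q' : Fin 2 → ℂ),
                e' ∈ Fstar ∧ (∀ a ∈ Fstar, pairE a f' = 0) ∧
                x = (outer estar q' + outer e' q, cube f' q)},
          σ ζ ξ = 0}
      = {x : AmbF | ∃ c : ℂ, x = c • ((outer estar q, 0) : AmbF)} := by
  -- Fstar is spanned by estar
  have hFspan : Fstar = Submodule.span ℂ {estar} := by
    have h1 : Submodule.span ℂ {estar} ≤ Fstar := by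
      rw [Submodule.span_le, Set.singleton_subset_iff]; exact heF
    have h2 : finrank ℂ (Submodule.span ℂ {estar}) = 1 := finrank_span_singleton he
    exact (Submodule.eq_of_le_of_finrank_le h1 (by rw [hFstar, h2])).symm
  -- a nonzero coordinate of q and a complementary index
  obtain ⟨k, hk⟩ : ∃ k, q k ≠ 0 := by
    by_contra h; push_neg at h; exact hq (funext h)
  set m : Fin 2 := if k = 0 then 1 else 0 with hm_def
  have hmk : m ≠ k := by
    have : ∀ k : Fin 2, (if k = 0 then (1 : Fin 2) else 0) ≠ k := by decide
    simpa [hm_def] using this k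
  have jcases : ∀ j : Fin 2, j = k ∨ j = m := by
    have : ∀ k j : Fin 2, j = k ∨ j = (if k = 0 then (1 : Fin 2) else 0) := by decide
    intro j; simpa [hm_def] using this k j
  set p : Fin 2 → ℂ := fun j => if j = k then (0:ℂ) else 1 with hp_def
  have hpk : p k = 0 := by simp [hp_def]
  have hpm : p m = 1 := by simp [hp_def, hmk]
  ext x
  simp only [Set.mem_setOf_eq]
  constructor
  · rintro ⟨hxTA, hker⟩
    rw [← SetLike.mem_coe, hTA] at hxTA
    obtain ⟨e1, f1, q0, hf1, rfl⟩ := hxTA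
    have hζ : ((outer estar q0 + outer e1 q, cube f1 q) : AmbF)
        = ((outer estar q0, 0) : AmbF) + (outer e1 q, 0) + (0, cube f1 q) := by
      simp [Prod.ext_iff]
    -- condition from ξ₁ = (estar ⊗ p, 0)
    have h1 := hker (outer estar p + outer (0 : Fin 3 → ℂ) q, cube (0 : Fin 3 → ℂ) q)
      ⟨0, 0, p, Fstar.zero_mem, fun a _ => pairE_zero_right a, rfl⟩
    rw [outer_zero_left, cube_zero, add_zero] at h1
    rw [hζ] at h1
    simp only [map_add, LinearMap.add_apply] at h1
    rw [hA q0 p, hsymm (outer e1 q, 0) (outer estar p, 0), hB p e1,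
      hsymm (0, cube f1 q) (outer estar p, 0), hC p f1 hf1, zero_add] at h1
    have hmem1 : ((outer e1 p, mixed f1 q p) : AmbF) ∈ TA := by
      have h1' : TA.mkQ (((outer e1 p, 0) : AmbF) + (0, mixed f1 q p)) = 0 := by
        rw [map_add]; exact h1
      rw [Submodule.mkQ_apply, Submodule.Quotient.mk_eq_zero] at h1'
      simpa using h1'
    rw [← SetLike.mem_coe, hTA] at hmem1
    obtain ⟨e2, f2, q2, hf2, heq⟩ := hmem1
    rw [Prod.ext_iff] at heq
    obtain ⟨hX, hY⟩ := heq
    -- from the Y part: f1 = 0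
    have hf1zero : f1 = 0 := by
      funext i
      have hYkk : f1 i * (q k * p k + p k * q k) = f2 i * q k * q k :=
        congrFun (congrFun (congrFun hY i) k) k
      have hYkm : f1 i * (q k * p m + p k * q m) = f2 i * q k * q m :=
        congrFun (congrFun (congrFun hY i) k) m
      rw [hpk] at hYkk
      rw [hpk, hpm] at hYkm
      have hf2i : f2 i = 0 := by
        have : f2 i * q k * q k = 0 := by linear_combination -hYkk
        rcases mul_eq_zero.mp this with h | h
        · rcases mul_eq_zero.mp h with h' | h'
          · exact h'
          · exact absurd h' hk
        · exact absurd h hk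
      have : f1 i * q k = 0 := by
        rw [hf2i] at hYkm; linear_combination hYkm
      rcases mul_eq_zero.mp this with h | h
      · simpa using h
      · exact absurd h hk
    -- from the X part: e1 = b • estar
    set b : ℂ := (q2 m * q k - q2 k * q m) / q k with hb_def
    have hbe : e1 = b • estar := by
      funext i
      have hXk : e1 i * p k = estar i * q2 k + e2 i * q k :=
        congrFun (congrFun hX i) k
      have hXm : e1 i * p m = estar i * q2 m + e2 i * q m :=
        congrFun (congrFun hX i) m
      rw [hpk, mul_zero] at hXk
      rw [hpm, mul_one] at hXm
      show e1 i = b * estar i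
      rw [hb_def]
      field_simp
      linear_combination q k * hXm - q m * hXk
    -- condition from ξ₂ = (0, fp ⊗ q²) with fp ⊥ estar, fp ≠ 0
    obtain ⟨fp, i1, hfp1, hfperp⟩ := exists_perp estar he
    have hfpF : ∀ a ∈ Fstar, pairE a fp = 0 := by
      intro a ha
      rw [hFspan, Submodule.mem_span_singleton] at ha
      obtain ⟨t, rfl⟩ := ha
      rw [pairE_smul_left, hfperp, mul_zero]
    have h2 := hker (outer estar 0 + outer (0 : Fin 3 → ℂ) q, cube fp q)
      ⟨0, fp, 0, Fstar.zero_mem, hfpF, rfl⟩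
    rw [outer_zero_left, outer_zero_right, add_zero] at h2
    rw [hζ] at h2
    simp only [map_add, LinearMap.add_apply] at h2
    have hpair0 : pairE e1 fp = 0 := by
      rw [hbe, pairE_smul_left, hfperp, mul_zero]
    rw [hC q0 fp hfperp, hE e1 fp hfperp, hF f1 fp hf1 hfperp, add_zero, hpair0,
      neg_zero, zero_smul] at h2
    have hz : TA.mkQ ((0, (0 : Fin 3 → Fin 2 → Fin 2 → ℂ)) : AmbF) = 0 := by
      simp
      exact TA.zero_mem
    rw [hz, add_zero] at h2
    have hmem2 : ((0, mixed fp q q0) : AmbF) ∈ TA := by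
      rw [← Submodule.Quotient.mk_eq_zero TA, ← Submodule.mkQ_apply]
      exact h2
    rw [← SetLike.mem_coe, hTA] at hmem2
    obtain ⟨e3, f3, q3, hf3, heq2⟩ := hmem2
    rw [Prod.ext_iff] at heq2
    obtain ⟨_, hY2⟩ := heq2
    -- q0 = c2 • q
    set c2 : ℂ := f3 i1 / (2 * fp i1) with hc2_def
    have key : ∀ j : Fin 2, (2 * fp i1 * q k * q k) * q0 j = (f3 i1 * q k * q k) * q j := by
      intro j
      have hkk : fp i1 * (q k * q0 k + q0 k * q k) = f3 i1 * q k * q k :=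
        congrFun (congrFun (congrFun hY2 i1) k) k
      rcases jcases j with h | h
      · rw [h]
        linear_combination q k * hkk
      · rw [h]
        have hkm : fp i1 * (q k * q0 m + q0 k * q m) = f3 i1 * q k * q m :=
          congrFun (congrFun (congrFun hY2 i1) k) m
        linear_combination 2 * q k * hkm - q m * hkk
    have hq0 : q0 = c2 • q := by
      funext j
      show q0 j = c2 * q j
      rw [hc2_def]
      have h2fp : (2 : ℂ) * fp i1 ≠ 0 := mul_ne_zero two_ne_zero hfp1
      field_simp
      have hcan : (q k * q k) * (q0 j * 2 * fp i1) = (q k * q k) * (f3 i1 * q j) := by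
        linear_combination key j
      exact mul_left_cancel₀ (mul_ne_zero hk hk) hcan
    refine ⟨c2 + b, ?_⟩
    rw [hq0, hbe, hf1zero, cube_zero]
    rw [Prod.ext_iff]
    constructor
    · funext i j
      show estar i * (c2 * q j) + (b * estar i) * q j = ((c2 + b) • outer estar q) i j
      simp [outer]; ring
    · show (0 : Fin 3 → Fin 2 → Fin 2 → ℂ) = ((c2 + b) • ((0 : Fin 3 → Fin 2 → Fin 2 → ℂ)))
      simp
  · rintro ⟨c, rfl⟩
    constructor
    · rw [← SetLike.mem_coe, hTA]
      refine ⟨c • estar, 0, 0, pairE_zero_right _, ?_⟩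
      rw [outer_zero_right, cube_zero, zero_add, outer_smul_left, Prod.smul_mk, smul_zero]
    · rintro ξ ⟨e', f', q', heF', hfp', rfl⟩
      have hξ : ((outer estar q' + outer e' q, cube f' q) : AmbF)
          = ((outer estar q', 0) : AmbF) + (outer e' q, 0) + (0, cube f' q) := by
        simp [Prod.ext_iff]
      rw [hξ, map_smul, LinearMap.smul_apply]
      simp only [map_add, LinearMap.add_apply]
      rw [hA q q', hB q e', hC q f' (hfp' estar heF)]
      have m1 : TA.mkQ ((outer e' q, 0) : AmbF) = 0 := by
        rw [Submodule.mkQ_apply, Submodule.Quotient.mk_eq_zero, ← SetLike.mem_coe, hTA]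
        exact ⟨e', 0, 0, pairE_zero_right _, by
          rw [outer_zero_right, cube_zero, zero_add]⟩
      have m2 : TA.mkQ ((0, mixed f' q q) : AmbF) = 0 := by
        rw [Submodule.mkQ_apply, Submodule.Quotient.mk_eq_zero, ← SetLike.mem_coe, hTA]
        refine ⟨0, (2:ℂ) • f', 0, ?_, ?_⟩
        · rw [pairE_smul_right, hfp' estar heF, mul_zero]
        · rw [outer_zero_left, outer_zero_right, add_zero, mixed_self]
      rw [m1, m2, add_zero, add_zero, smul_zero]
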